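/- Let p be a prime number, let c be a non-negative integer, let Γ be a group, and let N be a normal subgroup of Γ such that the quotient group Γ/N has bounded finite subgroups. Suppose that N is nilpotently p-Jordan of class at most c, i.e., there exist constants J and e such that every finite subgroup G' of N contains a normal subgroup of order coprime to p and index at most J·|G'_p|^e that is nilpotent of class at most c, where G'_p is a p-Sylow subgroup of G'. Then Γ is nilpotently p-Jordan of class at most c: there exist constants J' and e' such that every finite subgroup G of Γ contains a normal subgroup of order coprime to p and index at most J'·|G_p|^{e'} that is nilpotent of class at most c, where G_p is a p-Sylow subgroup of G. -/

import Mathlib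

private lemma ucs_top_of_surjective' {A B : Type*} [Group A] [Group B] (f : A →* B)
    (hf : Function.Surjective f) {c : ℕ} (h : upperCentralSeries A c = ⊤) :
    upperCentralSeries B c = ⊤ := by
  haveI hA : Group.IsNilpotent A := ⟨⟨c, h⟩⟩
  haveI hB : Group.IsNilpotent B := nilpotent_of_surjective f hf
  change Subgroup.upperCentralSeries A c = ⊤ at h
  change Subgroup.upperCentralSeries B c = ⊤
  rw [upperCentralSeries_eq_top_iff_nilpotencyClass_le] at h ⊢
  exact (nilpotencyClass_le_of_surjective f hf).trans h

private lemma ucs_top_of_le' {G : Type*} [Group G] {H K : Subgroup G} (hle : H ≤ K) {c : ℕ}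
    (h : upperCentralSeries ↥K c = ⊤) : upperCentralSeries ↥H c = ⊤ := by
  haveI : Group.IsNilpotent ↥K := ⟨⟨c, h⟩⟩
  have h1 : Group.nilpotencyClass ↥(H.subgroupOf K) ≤ c :=
    (Subgroup.nilpotencyClass_le _).trans (upperCentralSeries_eq_top_iff_nilpotencyClass_le.mp h)
  exact ucs_top_of_surjective' (Subgroup.subgroupOfEquivOfLe hle).toMonoidHom
    (Subgroup.subgroupOfEquivOfLe hle).surjective
    (upperCentralSeries_eq_top_iff_nilpotencyClass_le.mpr h1)

/-- If `N` is a normal subgroup of `Γ` such that `Γ/N` has bounded finite subgroups and `N`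
is nilpotently `p`-Jordan of class at most `c`, then `Γ` is nilpotently `p`-Jordan of class
at most `c`. -/
theorem nilpotently_p_jordan_of_normal_quotient_bounded
    (p : ℕ) (hp : p.Prime) (c : ℕ)
    (Γ : Type*) [Group Γ] (N : Subgroup Γ) (hN : N.Normal)
    (hbound : ∃ B : ℕ, ∀ Q : Subgroup (Γ ⧸ N), Finite Q → Nat.card Q ≤ B)
    (hpJordan : ∃ J e : ℕ, 0 < J ∧ ∀ G' : Subgroup ↥N, Finite G' →
      ∀ G'p : Sylow p ↥G',
        ∃ M : Subgroup ↥G', M.Normal ∧ upperCentralSeries ↥M c = ⊤ ∧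
          Nat.Coprime (Nat.card M) p ∧
          M.index ≤ J * (Nat.card G'p) ^ e) :
    ∃ J' e' : ℕ, 0 < J' ∧ ∀ G : Subgroup Γ, Finite G →
      ∀ Gp : Sylow p ↥G,
        ∃ M : Subgroup ↥G, M.Normal ∧ upperCentralSeries ↥M c = ⊤ ∧
          Nat.Coprime (Nat.card M) p ∧
          M.index ≤ J' * (Nat.card Gp) ^ e' := by
  haveI := Fact.mk hp
  obtain ⟨B, hB⟩ := hbound
  obtain ⟨J, e, hJ, hJordan⟩ := hpJordan
  have hB1 : 1 ≤ B := le_trans (by simp [Subgroup.card_bot]) (hB ⊥ inferInstance)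
  refine ⟨(B * J) ^ B, e * B, by positivity, fun G hGfin Gp => ?_⟩
  -- the subgroup `G ∩ N` viewed inside `N`
  set G' : Subgroup ↥N := G.subgroupOf N with hG'
  -- the embedding of `G'` into `G`
  let f : ↥G' →* ↥G :=
    { toFun := fun x => ⟨(x : ↥N), x.2⟩
      map_one' := rfl
      map_mul' := fun _ _ => rfl }
  have hfinj : Function.Injective f := by
    intro a b hab
    ext
    exact congrArg (fun y : ↥G => (y : Γ)) hab
  haveI : Finite ↥G' := Finite.of_injective f hfinj
  -- `G ∩ N` viewed inside `G`
  set K₁ : Subgroup ↥G := N.subgroupOf G with hK₁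
  have hrange : f.range = K₁ := by
    ext x
    constructor
    · rintro ⟨y, rfl⟩
      exact y.1.2
    · intro hx
      exact ⟨⟨⟨(x : Γ), hx⟩, x.2⟩, rfl⟩
  haveI hK₁norm : K₁.Normal := hN.subgroupOf G
  -- index of `K₁` in `G` is at most `B`
  have hK₁index : K₁.index ≤ B := by
    let φ : ↥G →* Γ ⧸ N := (QuotientGroup.mk' N).comp G.subtype
    have hker : φ.ker = K₁ := by
      ext x
      simp only [φ, MonoidHom.mem_ker, MonoidHom.comp_apply, QuotientGroup.mk'_apply,
        QuotientGroup.eq_one_iff]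
      rfl
    haveI : Finite ↥φ.range := Finite.of_surjective φ.rangeRestrict φ.rangeRestrict_surjective
    calc K₁.index = Nat.card φ.range := by rw [← hker, Subgroup.index_ker]
      _ ≤ B := hB φ.range inferInstance
  -- apply the hypothesis to `G'`
  obtain ⟨G'p⟩ := (inferInstance : Nonempty (Sylow p ↥G'))
  obtain ⟨M, hMnorm, hMnilp, hMcop, hMindex⟩ := hJordan G' inferInstance G'p
  -- `card G'p ≤ card Gp`
  have hcard_sylow : Nat.card G'p ≤ Nat.card Gp := by
    have hpgrp : IsPGroup p ((G'p : Subgroup ↥G').map f) := G'p.2.map f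
    obtain ⟨Q, hQ⟩ := hpgrp.exists_le_sylow
    have h1 : Nat.card G'p = Nat.card ((G'p : Subgroup ↥G').map f) :=
      Nat.card_congr (Subgroup.equivMapOfInjective _ f hfinj).toEquiv
    have h2 : Nat.card ((G'p : Subgroup ↥G').map f) ≤ Nat.card Q :=
      Subgroup.card_le_of_le hQ
    have h3 : Nat.card Q = Nat.card Gp := by
      rw [Sylow.card_eq_multiplicity, Sylow.card_eq_multiplicity]
    omega
  -- push `M` into `G`
  set M₁ : Subgroup ↥G := M.map f with hM₁
  have hM₁le : M₁ ≤ K₁ := hrange ▸ (M.map_le_range f)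
  have hcardM₁ : Nat.card M₁ = Nat.card M :=
    (Nat.card_congr (Subgroup.equivMapOfInjective _ f hfinj).toEquiv).symm
  have hcardK₁ : Nat.card K₁ = Nat.card ↥G' := by
    rw [← hrange]
    exact (Nat.card_congr (MonoidHom.ofInjective hfinj).toEquiv).symm
  -- `M₁.index = M.index * K₁.index`
  have hMpos : 0 < Nat.card M := Nat.card_pos
  have hM₁index : M₁.index = M.index * K₁.index := by
    have e1 : Nat.card M₁ * M₁.index = Nat.card ↥G := Subgroup.card_mul_index M₁
    have e2 : Nat.card K₁ * K₁.index = Nat.card ↥G := Subgroup.card_mul_index K₁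
    have e3 : Nat.card M * M.index = Nat.card ↥G' := Subgroup.card_mul_index M
    have key : Nat.card M * M₁.index = Nat.card M * (M.index * K₁.index) := by
      rw [← mul_assoc, e3, ← hcardK₁, e2, ← e1, hcardM₁]
    exact Nat.eq_of_mul_eq_mul_left hMpos key
  -- conjugation by elements of `K₁` preserves `M₁`
  have hconj : ∀ k ∈ K₁, ∀ m ∈ M₁, k * m * k⁻¹ ∈ M₁ := by
    intro k hk m hm
    obtain ⟨k', rfl⟩ : ∃ k', f k' = k := by rwa [← hrange] at hk
    obtain ⟨m', hm', rfl⟩ := hm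
    exact ⟨k' * m' * k'⁻¹, hMnorm.conj_mem m' hm' k', by simp [map_mul]⟩
  have hconj_iff : ∀ k ∈ K₁, ∀ m : ↥G, (k * m * k⁻¹ ∈ M₁ ↔ m ∈ M₁) := by
    intro k hk m
    constructor
    · intro h
      have := hconj k⁻¹ (K₁.inv_mem hk) _ h
      simpa [mul_assoc] using this
    · exact hconj k hk m
  -- the conjugates of `M₁`, indexed by the quotient `G ⧸ K₁`
  let S : ↥G → Subgroup ↥G := fun g => M₁.comap ((MulAut.conj g).toMonoidHom)
  have hS : ∀ g x : ↥G, x ∈ S g ↔ g * x * g⁻¹ ∈ M₁ := fun g x => Iff.rfl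
  have hSwd : ∀ a b : ↥G, (QuotientGroup.leftRel K₁) a b → S a = S b := by
    intro a b hab
    rw [QuotientGroup.leftRel_apply] at hab
    ext x
    rw [hS, hS]
    have hk : a * (a⁻¹ * b) * a⁻¹ ∈ K₁ := hK₁norm.conj_mem _ hab a
    have key := hconj_iff _ hk (a * x * a⁻¹)
    have heq : (a * (a⁻¹ * b) * a⁻¹) * (a * x * a⁻¹) * (a * (a⁻¹ * b) * a⁻¹)⁻¹
        = b * x * b⁻¹ := by group
    rw [heq] at key
    exact key.symm
  let T : (↥G ⧸ K₁) → Subgroup ↥G := Quotient.lift S hSwd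
  have hT : ∀ g : ↥G, T (QuotientGroup.mk g) = S g := fun g => rfl
  have hcore : M₁.normalCore = ⨅ q : ↥G ⧸ K₁, T q := by
    have h1 : M₁.normalCore = ⨅ g : ↥G, S g := by
      ext x
      rw [Subgroup.mem_iInf]
      exact Iff.rfl
    rw [h1]
    exact (iInf_congr hT).symm.trans
      (Function.Surjective.iInf_comp (QuotientGroup.mk_surjective (s := K₁)) T)
  haveI : Fintype (↥G ⧸ K₁) := Fintype.ofFinite _
  have hTindex : ∀ q : ↥G ⧸ K₁, (T q).index = M₁.index := by
    intro q
    obtain ⟨g, rfl⟩ := QuotientGroup.mk_surjective q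
    rw [hT]
    exact Subgroup.index_comap_of_surjective (H := M₁) (MulAut.conj g).surjective
  -- index bound for the normal core
  have hx1 : 1 ≤ Nat.card Gp := Nat.card_pos
  have hbase : M₁.index ≤ B * J * Nat.card Gp ^ e := by
    calc M₁.index = M.index * K₁.index := hM₁index
      _ ≤ (J * Nat.card G'p ^ e) * B := by
          exact Nat.mul_le_mul hMindex hK₁index
      _ ≤ (J * Nat.card Gp ^ e) * B := by
          exact Nat.mul_le_mul_right _ (Nat.mul_le_mul_left _
            (Nat.pow_le_pow_left hcard_sylow e))
      _ = B * J * Nat.card Gp ^ e := by ring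
  have hcoreindex : M₁.normalCore.index ≤ (B * J) ^ B * Nat.card Gp ^ (e * B) := by
    have hcardq : Fintype.card (↥G ⧸ K₁) = K₁.index := by
      rw [← Nat.card_eq_fintype_card]
      rfl
    calc M₁.normalCore.index = (⨅ q : ↥G ⧸ K₁, T q).index := by rw [hcore]
      _ ≤ ∏ q : ↥G ⧸ K₁, (T q).index := Subgroup.index_iInf_le T
      _ = M₁.index ^ K₁.index := by
          rw [← hcardq]
          simp [hTindex, Finset.prod_const]
      _ ≤ (B * J * Nat.card Gp ^ e) ^ K₁.index := Nat.pow_le_pow_left hbase _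
      _ ≤ (B * J * Nat.card Gp ^ e) ^ B := by
          apply Nat.pow_le_pow_right _ hK₁index
          have : 1 ≤ Nat.card Gp ^ e := Nat.one_le_pow _ _ hx1
          calc 1 ≤ B * J := Nat.one_le_iff_ne_zero.mpr (by positivity)
            _ ≤ B * J * Nat.card Gp ^ e := Nat.le_mul_of_pos_right _ (by positivity)
      _ = (B * J) ^ B * Nat.card Gp ^ (e * B) := by
          rw [mul_pow, ← pow_mul]
  -- assemble the answer
  refine ⟨M₁.normalCore, inferInstance, ?_, ?_, hcoreindex⟩
  · -- nilpotency
    have hM₁nilp : upperCentralSeries ↥M₁ c = ⊤ :=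
      ucs_top_of_surjective' (Subgroup.equivMapOfInjective M f hfinj).toMonoidHom
        (Subgroup.equivMapOfInjective M f hfinj).surjective hMnilp
    exact ucs_top_of_le' M₁.normalCore_le hM₁nilp
  · -- coprimality
    have hdvd : Nat.card M₁.normalCore ∣ Nat.card M₁ :=
      Subgroup.card_dvd_of_le M₁.normalCore_le
    rw [hcardM₁] at hdvd
    exact Nat.Coprime.coprime_dvd_left hdvd hMcop
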